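/- Let φ be the linear flow on ℝ² generated by [[1, −2π/ln 10],[2π/ln 10, 1]]. Then the function t ↦ |φ_t| (Euclidean operator norm) equals e^t for all t, and in particular is b-Benford for every integer base b ≥ 2, even though the spectrum {1 ± 2πi/ln 10} of the generator is exponentially 10-resonant. -/

import Mathlib

open MeasureTheory Filter Set
open scoped Classical

/-- Base-`b` significand: `S_b(x) ∈ [1,b)` with `|x| = S_b(x)·b^k`; `S_b(0)=0`. -/
noncomputable def significand (b : ℕ) (x : ℝ) : ℝ :=
  if x = 0 then 0 else |x| / (b : ℝ) ^ (Int.log b |x|)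

/-- `f` is `b`-Benford. -/
noncomputable def IsBenford (b : ℕ) (f : ℝ → ℝ) : Prop :=
  ∀ s : ℝ, 1 ≤ s → s < (b : ℝ) →
    Tendsto (fun T : ℝ =>
        (volume {t : ℝ | 0 ≤ t ∧ t ≤ T ∧ significand b (f t) ≤ s}).toReal / T)
      atTop (nhds (Real.logb b s))

/-- A subset of the circle `ℝ/ℤ` is an arc if it is the image of an interval. -/
def IsArc (J : Set UnitAddCircle) : Prop :=
  ∃ a c : ℝ, J = (fun x : ℝ => (x : UnitAddCircle)) '' Set.Ico a c

/-- `f` is continuously uniformly distributed mod 1. -/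
noncomputable def CUDMod1 (f : ℝ → ℝ) : Prop :=
  ∀ J : Set UnitAddCircle, IsArc J →
    Tendsto (fun T : ℝ =>
        (volume {t : ℝ | 0 ≤ t ∧ t ≤ T ∧ ((f t : UnitAddCircle) ∈ J)}).toReal / T)
      atTop (nhds ((volume J).toReal))

/-- A sequence (indexed from 1) is uniformly distributed mod 1. -/
noncomputable def UDMod1 (x : ℕ → ℝ) : Prop :=
  ∀ J : Set UnitAddCircle, IsArc J →
    Tendsto (fun N : ℕ =>
        ((Finset.Icc 1 N).filter (fun n => ((x n : UnitAddCircle) ∈ J))).card / (N : ℝ))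
      atTop (nhds ((volume J).toReal))

/-- The set `Δ_W` associated with `W ⊆ ℂ`. -/
noncomputable def deltaSet (W : Set ℂ) : Set ℝ :=
  {x | ∃ z ∈ W, ∃ w ∈ W, x = 1 + (Complex.arg z - Complex.arg w) / (2 * Real.pi)}

/-- `W ⊆ ℂ` is `b`-nonresonant. -/
noncomputable def BNonresonant (b : ℕ) (W : Set ℂ) : Prop :=
  ∀ r : ℝ, 0 < r → (W ∩ {z | ‖z‖ = r}).Nonempty →
    (deltaSet (W ∩ {z | ‖z‖ = r}) ∩ Set.range ((↑) : ℚ → ℝ) = {1}) ∧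
    Real.logb b r ∉ Submodule.span ℚ (deltaSet (W ∩ {z | ‖z‖ = r}))

/-- `Z ⊆ ℂ` is exponentially `b`-nonresonant. -/
noncomputable def ExpBNonresonant (b : ℕ) (Z : Set ℂ) : Prop :=
  ∃ t : ℝ, 0 ≤ t ∧ BNonresonant b ((fun z => Complex.exp (t * z)) '' Z)

/-- The spectrum (set of complex eigenvalues) of a real square matrix. -/
noncomputable def realSpectrum {d : ℕ} (A : Matrix (Fin d) (Fin d) ℝ) : Set ℂ :=
  spectrum ℂ (A.map (algebraMap ℝ ℂ))

/-- for the flow generated by `[[1, −2π/ln 10],[2π/ln 10, 1]]`, the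
Euclidean operator norm of `φ_t` equals `e^t` and is Benford in every base, although
the spectrum of the generator is exponentially `10`-resonant. -/

noncomputable def cmat : ℂ →+* Matrix (Fin 2) (Fin 2) ℝ where
  toFun z := !![z.re, -z.im; z.im, z.re]
  map_one' := by simp [Matrix.one_fin_two]
  map_mul' z w := by
    ext i j
    fin_cases i <;> fin_cases j <;>
      simp [Matrix.mul_fin_two, Complex.mul_re, Complex.mul_im] <;> ring
  map_zero' := by
    ext i j; fin_cases i <;> fin_cases j <;> simp
  map_add' z w := by
    ext i j; fin_cases i <;> fin_cases j <;> simp <;> ring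

lemma cmat_cont : Continuous cmat := by
  apply continuous_matrix
  intro i j
  fin_cases i <;> fin_cases j <;>
    simp [cmat] <;> fun_prop

lemma exp_smul_eq (t : ℝ) :
    NormedSpace.exp (t • !![1, -(2 * Real.pi / Real.log 10);
        2 * Real.pi / Real.log 10, 1]) =
      cmat (Complex.exp (t * (1 + (2 * Real.pi / Real.log 10 : ℝ) * Complex.I))) := by
  set θ : ℝ := 2 * Real.pi / Real.log 10
  have h1 : t • !![(1:ℝ), -θ; θ, 1] = cmat (t * (1 + (θ:ℝ) * Complex.I)) := by
    ext i j
    fin_cases i <;> fin_cases j <;>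
      simp [cmat, Complex.mul_re, Complex.mul_im, Complex.add_re, Complex.add_im,
        Complex.ofReal_re, Complex.ofReal_im] <;> ring
  letI : SeminormedRing (Matrix (Fin 2) (Fin 2) ℝ) := Matrix.linftyOpSemiNormedRing
  letI : NormedRing (Matrix (Fin 2) (Fin 2) ℝ) := Matrix.linftyOpNormedRing
  letI : NormedAlgebra ℝ (Matrix (Fin 2) (Fin 2) ℝ) := Matrix.linftyOpNormedAlgebra
  rw [h1, Complex.exp_eq_exp_ℂ]
  exact (NormedSpace.map_exp cmat cmat_cont _).symm

lemma part1 (t : ℝ) :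
    ‖Matrix.toEuclideanCLM (𝕜 := ℝ)
        (NormedSpace.exp (t • !![1, -(2 * Real.pi / Real.log 10);
                                   2 * Real.pi / Real.log 10, 1]))‖ = Real.exp t := by
  rw [exp_smul_eq]
  set θ : ℝ := 2 * Real.pi / Real.log 10
  set z : ℂ := t * (1 + (θ:ℝ) * Complex.I)
  have hre : z.re = t := by simp [z, Complex.mul_re]
  have him : z.im = t * θ := by simp [z, Complex.mul_im]
  apply ContinuousLinearMap.homothety_norm
  intro x
  have key : ∀ i, (Matrix.toEuclideanCLM (𝕜 := ℝ) (cmat (Complex.exp z)) x) i =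
      Matrix.toLin' (cmat (Complex.exp z)) (WithLp.equiv 2 _ x) i := by
    intro i
    rw [Matrix.ofLp_toEuclideanCLM]
    rfl
  rw [EuclideanSpace.norm_eq, EuclideanSpace.norm_eq]
  simp only [key]
  have hC := Real.sin_sq_add_cos_sq (t * θ)
  have hE := Real.exp_pos t
  rw [Fin.sum_univ_two, Fin.sum_univ_two]
  simp only [Matrix.toLin'_apply, Matrix.mulVec, dotProduct, Fin.sum_univ_two,
    Real.norm_eq_abs, sq_abs, cmat, Complex.exp_re, Complex.exp_im, hre, him,
    RingHom.coe_mk, MonoidHom.coe_mk, OneHom.coe_mk, Matrix.cons_val', Matrix.cons_val_zero,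
    Matrix.cons_val_one, Matrix.head_cons, Matrix.head_fin_const, Matrix.empty_val',
    Matrix.cons_val_fin_one]
  simp only [Matrix.of_apply, Matrix.cons_val', Matrix.cons_val_zero, Matrix.cons_val_one,
    Matrix.head_cons, Matrix.empty_val', Matrix.cons_val_fin_one, WithLp.equiv_apply,
    Matrix.head_fin_const]
  conv_rhs => rw [← Real.sqrt_sq hE.le, ← Real.sqrt_mul (sq_nonneg _)]
  congr 1
  linear_combination (Real.exp t ^ 2 * (x 0 ^ 2 + x 1 ^ 2)) * hC


lemma benford_exp {b : ℕ} (hb : 2 ≤ b) : IsBenford b Real.exp := by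
  intro s hs1 hsb
  have hbR : (1:ℝ) < (b:ℝ) := by exact_mod_cast hb
  have hL : 0 < Real.log b := Real.log_pos hbR
  set L : ℝ := Real.log b with hLdef
  set c : ℝ := Real.logb b s with hcdef
  have hs0 : (0:ℝ) < s := lt_of_lt_of_le one_pos hs1
  have hc0 : 0 ≤ c := Real.logb_nonneg hbR hs1
  have hc1 : c < 1 := by
    rw [hcdef, Real.logb, div_lt_one hL]
    exact Real.log_lt_log hs0 hsb
  have hcl : c * L = Real.log s := by
    rw [hcdef, Real.logb, hLdef]
    field_simp
    exact mul_div_cancel_right₀ _ hL.ne'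
  -- pointwise equivalence
  have hiff : ∀ t : ℝ, 0 ≤ t → (significand b (Real.exp t) ≤ s ↔ Int.fract (t / L) ≤ c) := by
    intro t _
    have het : Real.exp t ≠ 0 := (Real.exp_pos t).ne'
    rw [significand, if_neg het, abs_of_pos (Real.exp_pos t)]
    have hk : Int.log b (Real.exp t) = ⌊t / L⌋ := by
      rw [← Real.floor_logb_natCast (Real.exp_pos t).le]
      congr 1
      rw [Real.logb, Real.log_exp]
    rw [hk]
    set k : ℤ := ⌊t / L⌋ with hkdef
    have hb0 : (0:ℝ) < (b:ℝ) := lt_trans one_pos hbR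
    have hbk : (0:ℝ) < (b:ℝ) ^ k := zpow_pos hb0 k
    have h1 : Real.exp t / (b:ℝ) ^ k ≤ s ↔ t ≤ Real.log s + k * L := by
      rw [div_le_iff₀ hbk]
      have hpos : (0:ℝ) < s * (b:ℝ) ^ k := mul_pos hs0 hbk
      rw [← Real.exp_log hpos, Real.exp_le_exp, Real.log_mul hs0.ne' hbk.ne',
        Real.log_zpow]
    have h2 : Int.fract (t / L) ≤ c ↔ t ≤ Real.log s + k * L := by
      rw [← Int.self_sub_floor, ← hkdef, sub_le_iff_le_add, div_le_iff₀ hL, add_mul, hcl]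
    exact h1.trans h2.symm
  have hset : ∀ T : ℝ, {t : ℝ | 0 ≤ t ∧ t ≤ T ∧ significand b (Real.exp t) ≤ s} =
      {t : ℝ | 0 ≤ t ∧ t ≤ T ∧ Int.fract (t / L) ≤ c} := by
    intro T
    ext t
    simp only [mem_setOf_eq]
    exact and_congr_right fun h0 => and_congr_right fun _ => hiff t h0
  simp only [hset]
  -- the intervals
  set A : ℕ → Set ℝ := fun n => Icc (n * L) (n * L + c * L) with hAdef
  have hvA : ∀ n, volume (A n) = ENNReal.ofReal (c * L) := by
    intro n
    rw [hAdef]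
    simp [Real.volume_Icc]
  set F : ℝ → Set ℝ := fun T => {t : ℝ | 0 ≤ t ∧ t ≤ T ∧ Int.fract (t / L) ≤ c} with hFdef
  have hfin : ∀ T : ℝ, volume (F T) ≠ ⊤ := by
    intro T
    have : F T ⊆ Icc 0 T := fun t ht => ⟨ht.1, ht.2.1⟩
    exact ((measure_mono this).trans_lt measure_Icc_lt_top).ne
  -- upper bound
  have hupper : ∀ T : ℝ, 0 ≤ T →
      (volume (F T)).toReal ≤ ((⌊T / L⌋₊ : ℝ) + 1) * (c * L) := by
    intro T hT
    have hsub : F T ⊆ ⋃ n ∈ Finset.range (⌊T / L⌋₊ + 1), A n := by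
      rintro t ⟨ht0, htT, htf⟩
      have htL : 0 ≤ t / L := div_nonneg ht0 hL.le
      have hfl : ((⌊t / L⌋₊ : ℕ) : ℝ) = ((⌊t / L⌋ : ℤ) : ℝ) := by
        exact_mod_cast congrArg (fun z : ℤ => (z : ℝ)) (Int.natCast_floor_eq_floor htL)
      have hfr : t / L - (⌊t / L⌋₊ : ℝ) ≤ c := by
        rw [hfl]
        calc t / L - (⌊t / L⌋ : ℝ) = Int.fract (t / L) := Int.self_sub_floor _
        _ ≤ c := htf
      have hmem1 : ⌊t / L⌋₊ ∈ Finset.range (⌊T / L⌋₊ + 1) := by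
        rw [Finset.mem_range, Nat.lt_succ_iff]
        exact Nat.floor_mono ((div_le_div_iff_of_pos_right hL).mpr htT)
      have hmem2 : t ∈ A ⌊t / L⌋₊ := by
        refine ⟨(le_div_iff₀ hL).mp (Nat.floor_le htL), ?_⟩
        have h5 : t / L ≤ (⌊t / L⌋₊ : ℝ) + c := by linarith
        have h6 := (div_le_iff₀ hL).mp h5
        linarith [h6]
      exact Set.mem_biUnion hmem1 hmem2
    have hb1 : volume (⋃ n ∈ Finset.range (⌊T / L⌋₊ + 1), A n) ≤
        ∑ n ∈ Finset.range (⌊T / L⌋₊ + 1), volume (A n) :=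
      measure_biUnion_finset_le _ _
    have h1 := (measure_mono hsub).trans hb1
    have h2 : ∑ n ∈ Finset.range (⌊T / L⌋₊ + 1), volume (A n) =
        ENNReal.ofReal (((⌊T / L⌋₊ : ℝ) + 1) * (c * L)) := by
      simp only [hvA, Finset.sum_const, Finset.card_range, nsmul_eq_mul]
      rw [← ENNReal.ofReal_natCast, ← ENNReal.ofReal_mul (by positivity)]
      push_cast
      ring_nf
    rw [h2] at h1
    exact ENNReal.toReal_le_of_le_ofReal (by positivity) h1
  -- lower bound
  have hlower : ∀ T : ℝ, 0 ≤ T →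
      (⌊T / L⌋₊ : ℝ) * (c * L) ≤ (volume (F T)).toReal := by
    intro T hT
    have hTL : 0 ≤ T / L := div_nonneg hT hL.le
    have hsub : (⋃ n ∈ Finset.range ⌊T / L⌋₊, A n) ⊆ F T := by
      intro t ht
      simp only [Set.mem_iUnion, Finset.mem_range] at ht
      obtain ⟨n, hn, htA⟩ := ht
      obtain ⟨h1, h2⟩ := htA
      have hn1 : (n:ℝ) + 1 ≤ (⌊T / L⌋₊ : ℝ) := by exact_mod_cast hn
      have hKT : (⌊T / L⌋₊ : ℝ) ≤ T / L := Nat.floor_le hTL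
      have hnL0 : 0 ≤ (n:ℝ) * L := by positivity
      have hcLL : c * L ≤ 1 * L := mul_le_mul_of_nonneg_right hc1.le hL.le
      have htT : t ≤ T := by
        have : t ≤ ((n:ℝ) + 1) * L := by linarith
        have h3 : ((n:ℝ) + 1) * L ≤ (T / L) * L := by
          apply mul_le_mul_of_nonneg_right _ hL.le
          linarith
        rw [div_mul_cancel₀ _ hL.ne'] at h3
        linarith
      refine ⟨le_trans hnL0 h1, htT, ?_⟩
      have hfl : ⌊t / L⌋ = (n : ℤ) := by
        rw [Int.floor_eq_iff]
        constructor
        · push_cast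
          exact (le_div_iff₀ hL).mpr (by linarith)
        · push_cast
          rw [div_lt_iff₀ hL]
          have : c * L < 1 * L := mul_lt_mul_of_pos_right hc1 hL
          linarith
      rw [← Int.self_sub_floor, hfl]
      push_cast
      rw [sub_le_iff_le_add, div_le_iff₀ hL]
      linarith
    have hdisj : (↑(Finset.range ⌊T / L⌋₊) : Set ℕ).PairwiseDisjoint A := by
      intro m _ n _ hmn
      have key : ∀ m n : ℕ, m < n → Disjoint (A m) (A n) := by
        intro m n h
        apply Set.disjoint_left.2
        rintro x ⟨_, hx2⟩ ⟨hx3, _⟩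
        have hm1 : (m:ℝ) + 1 ≤ (n:ℝ) := by exact_mod_cast h
        have : c * L < 1 * L := mul_lt_mul_of_pos_right hc1 hL
        have : (m:ℝ) * L + c * L < (n:ℝ) * L := by nlinarith
        linarith
      rcases lt_or_gt_of_ne hmn with h | h
      · exact key m n h
      · exact (key n m h).symm
    have heq : volume (⋃ n ∈ Finset.range ⌊T / L⌋₊, A n) =
        ENNReal.ofReal ((⌊T / L⌋₊ : ℝ) * (c * L)) := by
      rw [measure_biUnion_finset hdisj (fun n _ => measurableSet_Icc)]
      simp only [hvA, Finset.sum_const, Finset.card_range, nsmul_eq_mul]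
      rw [← ENNReal.ofReal_natCast, ← ENNReal.ofReal_mul (by positivity)]
    have h1 : ENNReal.ofReal ((⌊T / L⌋₊ : ℝ) * (c * L)) ≤ volume (F T) := by
      rw [← heq]
      exact measure_mono hsub
    exact (ENNReal.ofReal_le_iff_le_toReal (hfin T)).mp h1
  -- limits
  have hdiv : Tendsto (fun T : ℝ => T / L) atTop atTop :=
    Tendsto.atTop_div_const hL tendsto_id
  have hfloor : Tendsto (fun T : ℝ => (⌊T / L⌋₊ : ℝ) / (T / L)) atTop (nhds 1) :=
    tendsto_nat_floor_div_atTop.comp hdiv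
  have hlow : Tendsto (fun T : ℝ => ((⌊T / L⌋₊ : ℝ) * (c * L)) / T) atTop (nhds c) := by
    have h2 : (fun T : ℝ => c * ((⌊T / L⌋₊ : ℝ) / (T / L))) =
        fun T : ℝ => ((⌊T / L⌋₊ : ℝ) * (c * L)) / T := by
      funext T
      rw [div_div_eq_mul_div]
      ring
    rw [← h2]
    simpa using hfloor.const_mul c
  have hzero : Tendsto (fun T : ℝ => (c * L) / T) atTop (nhds 0) :=
    tendsto_const_nhds.div_atTop tendsto_id
  have hup : Tendsto (fun T : ℝ => (((⌊T / L⌋₊ : ℝ) + 1) * (c * L)) / T) atTop (nhds c) := by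
    have := hlow.add hzero
    rw [add_zero] at this
    convert this using 2 with T
    ring
  apply tendsto_of_tendsto_of_tendsto_of_le_of_le' hlow hup
  · filter_upwards [eventually_ge_atTop (0:ℝ), eventually_gt_atTop (0:ℝ)] with T hT0 hTpos
    exact (div_le_div_iff_of_pos_right hTpos).mpr (hlower T hT0)
  · filter_upwards [eventually_ge_atTop (0:ℝ), eventually_gt_atTop (0:ℝ)] with T hT0 hTpos
    exact (div_le_div_iff_of_pos_right hTpos).mpr (hupper T hT0)


/-- if `exp (x*I) = exp (y*I)` for reals, then `x = y + n*(2π)` -/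
lemma arg_exp_aux {x y : ℝ} (h : Complex.exp (x * Complex.I) = Complex.exp (y * Complex.I)) :
    ∃ n : ℤ, x = y + n * (2 * Real.pi) := by
  rw [Complex.exp_eq_exp_iff_exists_int] at h
  obtain ⟨n, hn⟩ := h
  refine ⟨n, ?_⟩
  have := congrArg Complex.im hn
  simpa [Complex.mul_im, Complex.mul_re] using this

lemma part3 : ¬ ExpBNonresonant 10
    {(1 : ℂ) + (2 * Real.pi / Real.log 10 : ℝ) * Complex.I,
     (1 : ℂ) - (2 * Real.pi / Real.log 10 : ℝ) * Complex.I} := by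
  rintro ⟨t, ht, hB⟩
  set θ : ℝ := 2 * Real.pi / Real.log 10 with hθ
  set z₁ : ℂ := 1 + (θ:ℝ) * Complex.I
  set z₂ : ℂ := 1 - (θ:ℝ) * Complex.I
  set W : Set ℂ := (fun z => Complex.exp (t * z)) '' {z₁, z₂}
  have habs1 : ‖Complex.exp (t * z₁)‖ = Real.exp t := by
    rw [Complex.norm_exp]; congr 1; simp [z₁, Complex.mul_re]
  have habs2 : ‖Complex.exp (t * z₂)‖ = Real.exp t := by
    rw [Complex.norm_exp]; congr 1; simp [z₂, Complex.mul_re, Complex.sub_re, Complex.sub_im]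
  set u : ℂ := Complex.exp (t * z₁)
  set v : ℂ := Complex.exp (t * z₂)
  set S : Set ℂ := W ∩ {z | ‖z‖ = Real.exp t}
  have hu : u ∈ S := ⟨⟨z₁, by simp, rfl⟩, habs1⟩
  have hv : v ∈ S := ⟨⟨z₂, by simp, rfl⟩, habs2⟩
  have hne : S.Nonempty := ⟨u, hu⟩
  obtain ⟨-, h2⟩ := hB (Real.exp t) (Real.exp_pos t) hne
  apply h2
  -- compute args mod 2π
  have hud : u = Complex.exp (t : ℂ) * Complex.exp ((t * θ : ℝ) * Complex.I) := by
    show Complex.exp ((t:ℂ) * z₁) = _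
    rw [← Complex.exp_add]
    congr 1
    simp only [z₁]
    push_cast
    ring
  have hu' : Complex.exp ((Complex.arg u : ℝ) * Complex.I) = Complex.exp ((t * θ : ℝ) * Complex.I) := by
    have h := Complex.norm_mul_exp_arg_mul_I u
    rw [habs1] at h
    conv_rhs at h => rw [hud]
    rw [Complex.ofReal_exp] at h
    exact mul_left_cancel₀ (Complex.exp_ne_zero _) h
  have hvd : v = Complex.exp (t : ℂ) * Complex.exp ((-(t * θ) : ℝ) * Complex.I) := by
    show Complex.exp ((t:ℂ) * z₂) = _
    rw [← Complex.exp_add]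
    congr 1
    simp only [z₂]
    push_cast
    ring
  have hv' : Complex.exp ((Complex.arg v : ℝ) * Complex.I) = Complex.exp ((-(t * θ) : ℝ) * Complex.I) := by
    have h := Complex.norm_mul_exp_arg_mul_I v
    rw [habs2] at h
    conv_rhs at h => rw [hvd]
    rw [Complex.ofReal_exp] at h
    exact mul_left_cancel₀ (Complex.exp_ne_zero _) h
  obtain ⟨n, hn⟩ := arg_exp_aux hu'
  obtain ⟨m, hm⟩ := arg_exp_aux hv'
  -- members of deltaSet
  have hd1 : (1 : ℝ) ∈ deltaSet S := ⟨u, hu, u, hu, by simp⟩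
  have hd2 : 1 + (Complex.arg u - Complex.arg v) / (2 * Real.pi) ∈ deltaSet S :=
    ⟨u, hu, v, hv, rfl⟩
  have hπ : (2 * Real.pi) ≠ 0 := by positivity
  have hlog10 : Real.log 10 ≠ 0 := by
    have : (1:ℝ) < 10 := by norm_num
    exact ne_of_gt (Real.log_pos this)
  have key : Real.logb ((10:ℕ):ℝ) (Real.exp t) =
      ((1:ℚ)/2 : ℚ) • (1 + (Complex.arg u - Complex.arg v) / (2 * Real.pi))
      + ((-(1 : ℚ) - n + m)/2 : ℚ) • (1:ℝ) := by
    rw [Real.logb, Real.log_exp]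
    have harg : Complex.arg u - Complex.arg v = 2 * (t * θ) + (n - m) * (2 * Real.pi) := by
      rw [hn, hm]; ring
    rw [harg, Rat.smul_def, Rat.smul_def, hθ]
    norm_num
    push_cast
    have hπ' : Real.pi ≠ 0 := Real.pi_ne_zero
    field_simp
    ring
  rw [key]
  exact Submodule.add_mem _
    (Submodule.smul_mem _ _ (Submodule.subset_span hd2))
    (Submodule.smul_mem _ _ (Submodule.subset_span hd1))

theorem norm_benford_despite_resonance :
    (∀ t : ℝ,
      ‖Matrix.toEuclideanCLM (𝕜 := ℝ)
          (NormedSpace.exp (t • !![1, -(2 * Real.pi / Real.log 10);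
                                     2 * Real.pi / Real.log 10, 1]))‖ = Real.exp t) ∧
    (∀ b : ℕ, 2 ≤ b → IsBenford b (fun t =>
      ‖Matrix.toEuclideanCLM (𝕜 := ℝ)
          (NormedSpace.exp (t • !![1, -(2 * Real.pi / Real.log 10);
                                     2 * Real.pi / Real.log 10, 1]))‖)) ∧
    ¬ ExpBNonresonant 10
        {(1 : ℂ) + (2 * Real.pi / Real.log 10 : ℝ) * Complex.I,
         (1 : ℂ) - (2 * Real.pi / Real.log 10 : ℝ) * Complex.I} := by
  refine ⟨part1, ?_, part3⟩
  intro b hb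
  have hfun : (fun t : ℝ =>
      ‖Matrix.toEuclideanCLM (𝕜 := ℝ)
          (NormedSpace.exp (t • !![1, -(2 * Real.pi / Real.log 10);
                                     2 * Real.pi / Real.log 10, 1]))‖) = Real.exp :=
    funext part1
  rw [hfun]
  exact benford_exp hb
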